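/- Let X be a set and let ρ be an equivalence relation on X which has exactly one non-singleton equivalence class (that is, exactly one equivalence class of ρ contains more than one element, and all other classes are singletons). Then ρ is an upper-modular element of the lattice Eq(X) of all equivalence relations on X: for all equivalence relations σ, τ on X with σ ≤ ρ, one has (τ ∨ σ) ∧ ρ = (τ ∧ ρ) ∨ σ. -/

import Mathlib

/-- An equivalence relation with exactly one non-singleton class is an upper-modular
element of the lattice of all equivalence relations. -/
theorem statement10 {X : Type*} (ρ : Setoid X)
    (hρ : ∃! c : Set X, c ∈ ρ.classes ∧ ∃ x ∈ c, ∃ y ∈ c, x ≠ y) :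
    ∀ σ τ : Setoid X, σ ≤ ρ → (τ ⊔ σ) ⊓ ρ = (τ ⊓ ρ) ⊔ σ := by
  obtain ⟨C, ⟨hC, x0, hx0, y0, hy0, hxy0⟩, huniq⟩ := hρ
  obtain ⟨w, hw⟩ := hC
  have memC : ∀ a, a ∈ C ↔ ρ a w := by intro a; rw [hw]; exact Iff.rfl
  have key : ∀ a b, ρ a b → a ≠ b → a ∈ C ∧ b ∈ C := by
    intro a b hab hne
    have h1 : {z | ρ z a} = C := by
      refine huniq _ ⟨ρ.mem_classes a, a, ρ.refl a, b, ρ.symm hab, hne⟩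
    constructor
    · rw [← h1]; exact ρ.refl a
    · rw [← h1]; exact ρ.symm hab
  have keyC : ∀ a b, a ∈ C → b ∈ C → ρ a b := by
    intro a b ha hb
    exact ρ.trans ((memC a).1 ha) (ρ.symm ((memC b).1 hb))
  intro σ τ hσρ
  apply le_antisymm
  · rw [Setoid.le_def]
    intro x y hxy
    obtain ⟨hsup, hρxy⟩ := Setoid.inf_iff_and.mp hxy
    by_cases hxyeq : x = y
    · subst hxyeq; exact (τ ⊓ ρ ⊔ σ).refl' _
    obtain ⟨hxC, hyC⟩ := key x y hρxy hxyeq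
    -- convert sup to ReflTransGen
    rw [Setoid.sup_eq_eqvGen] at hsup
    have hsymm : Symmetric (fun a b => τ a b ∨ σ a b) := by
      intro a b h; exact h.imp τ.symm σ.symm
    have toRTG : ∀ a b, Relation.EqvGen (fun a b => τ a b ∨ σ a b) a b →
        Relation.ReflTransGen (fun a b => τ a b ∨ σ a b) a b := by
      intro a b h
      induction h with
      | rel a b h => exact Relation.ReflTransGen.single h
      | refl a => exact Relation.ReflTransGen.refl
      | symm a b _ ih => exact (@Relation.ReflTransGen.stdSymm _ _ ⟨fun _ _ h => hsymm h⟩).symm _ _ ih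
      | trans a b c _ _ ih1 ih2 => exact ih1.trans ih2
    have hrtg : Relation.ReflTransGen (fun a b => τ a b ∨ σ a b) x y := toRTG x y hsup
    -- main chain induction
    have main : ∀ b, Relation.ReflTransGen (fun a b => τ a b ∨ σ a b) x b →
        ∃ z ∈ C, ((τ ⊓ ρ) ⊔ σ) x z ∧ τ z b := by
      intro b hb
      induction hb with
      | refl => exact ⟨x, hxC, (τ ⊓ ρ ⊔ σ).refl' _, τ.refl' x⟩
      | @tail b c hab hbc ih =>
        obtain ⟨z, hzC, hxz, hzb⟩ := ih
        rcases hbc with ht | hs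
        · exact ⟨z, hzC, hxz, τ.trans' hzb ht⟩
        · by_cases hbc' : b = c
          · subst hbc'; exact ⟨z, hzC, hxz, hzb⟩
          · obtain ⟨hbC, hcC⟩ := key b c (Setoid.le_def.mp hσρ hs) hbc'
            have hzb' : ((τ ⊓ ρ) ⊔ σ) z b :=
              Setoid.le_def.mp le_sup_left (Setoid.inf_iff_and.mpr ⟨hzb, keyC z b hzC hbC⟩)
            have hbc'' : ((τ ⊓ ρ) ⊔ σ) b c := Setoid.le_def.mp le_sup_right hs
            exact ⟨c, hcC, (τ ⊓ ρ ⊔ σ).trans' ((τ ⊓ ρ ⊔ σ).trans' hxz hzb') hbc'', τ.refl' c⟩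
    obtain ⟨z, hzC, hxz, hzy⟩ := main y hrtg
    have : ((τ ⊓ ρ) ⊔ σ) z y :=
      Setoid.le_def.mp le_sup_left (Setoid.inf_iff_and.mpr ⟨hzy, keyC z y hzC hyC⟩)
    exact (τ ⊓ ρ ⊔ σ).trans' hxz this
  · refine sup_le (le_inf (le_trans inf_le_left le_sup_left) inf_le_right)
      (le_inf le_sup_right hσρ)
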